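/- arXiv:0707.1570 — 2 statements merged into one kernel-verified Lean document; each statement's English description precedes it below -/
import Mathlib

section
/- There exists an absolute constant c' > 0 such that for every n ≥ 3, every unit vector θ ∈ S^{n−1}, and every α with c/√n ≤ α ≤ 1/4 (for a suitable absolute constant c), one has σ{ P ∈ S^{n−1} : |⟨P,θ⟩| > α } ≥ c'·e^{−4α²n}. -/
open MeasureTheory
open scoped RealInnerProductSpace

/-- The uniform (rotation invariant) probability measure on the unit sphere
`S^{n-1} ⊆ ℝⁿ`, viewed as a measure on the ambient space `ℝⁿ`. -/
noncomputable def sphereUniform (n : ℕ) : Measure (EuclideanSpace ℝ (Fin n)) :=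
  Measure.map Subtype.val
    ((((volume : Measure (EuclideanSpace ℝ (Fin n))).toSphere) Set.univ)⁻¹ •
      ((volume : Measure (EuclideanSpace ℝ (Fin n))).toSphere))

open Metric in
/-- The set where the sum of squares is `< r ^ 2` is the euclidean ball. -/
private lemma vol_sumSq_eq_ball (m : ℕ) {r : ℝ} (hr : 0 < r) :
    volume {z : Fin (m+1) → ℝ | ∑ j, z j ^ 2 < r ^ 2}
      = volume (ball (0 : EuclideanSpace ℝ (Fin (m+1))) r) := by
  have hset : {z : Fin (m+1) → ℝ | ∑ j, z j ^ 2 < r ^ 2}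
      = (WithLp.equiv 2 (Fin (m+1) → ℝ)).symm ⁻¹'
        (ball (0 : EuclideanSpace ℝ (Fin (m+1))) r) := by
    ext z
    simp only [Set.mem_setOf_eq, Set.mem_preimage, mem_ball_zero_iff]
    rw [EuclideanSpace.norm_eq, Real.sqrt_lt' hr]
    simp only [WithLp.equiv_symm_apply, WithLp.ofLp_toLp, Real.norm_eq_abs, sq_abs]
  rw [hset, WithLp.equiv_symm_apply, (PiLp.volume_preserving_toLp (Fin (m+1))).measure_preimage
    measurableSet_ball.nullMeasurableSet]

open Metric in
private lemma vol_sumSq (m : ℕ) {r : ℝ} (hr : 0 < r) :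
    volume {z : Fin (m+1) → ℝ | ∑ j, z j ^ 2 < r ^ 2}
      = ENNReal.ofReal (r ^ (m+1)) * volume (ball (0 : EuclideanSpace ℝ (Fin (m+1))) 1) := by
  rw [vol_sumSq_eq_ball m hr, Measure.addHaar_ball _ _ hr.le, finrank_euclideanSpace_fin]

open Metric in
/-- Upper bound on the volume of the unit ball in terms of the unit ball one dimension lower. -/
private lemma ball_vol_upper (m : ℕ) :
    volume (ball (0 : EuclideanSpace ℝ (Fin (m+3))) 1) ≤
      ENNReal.ofReal (Real.sqrt (2 * Real.pi / (m+2))) *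
        volume (ball (0 : EuclideanSpace ℝ (Fin (m+2))) 1) := by
  classical
  set V := volume (ball (0 : EuclideanSpace ℝ (Fin (m+2))) 1) with hV
  -- Step 1: rewrite as a pi-type volume
  have h1 : volume (ball (0 : EuclideanSpace ℝ (Fin (m+3))) 1)
      = volume {z : Fin (m+3) → ℝ | ∑ j, z j ^ 2 < 1} := by
    have := (vol_sumSq_eq_ball (m+2) (r := 1) one_pos).symm
    simpa using this
  -- Step 2: split off the first coordinate
  set W : Set (ℝ × (Fin (m+2) → ℝ)) := {p | p.1^2 + ∑ j, p.2 j ^ 2 < 1} with hW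
  have hWm : MeasurableSet W := by
    apply measurableSet_lt _ measurable_const
    exact (measurable_fst.pow_const 2).add
      (Finset.measurable_sum _ fun j _ => ((measurable_pi_apply j).comp measurable_snd).pow_const 2)
  have h2 : {z : Fin (m+3) → ℝ | ∑ j, z j ^ 2 < 1}
      = (MeasurableEquiv.piFinSuccAbove (fun _ : Fin (m+3) => ℝ) 0) ⁻¹' W := by
    ext z
    simp only [Set.mem_setOf_eq, Set.mem_preimage, hW]
    rw [Fin.sum_univ_succ]
    exact Iff.rfl
  have h3 : volume {z : Fin (m+3) → ℝ | ∑ j, z j ^ 2 < 1} = ((volume : Measure ℝ).prod volume) W := by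
    rw [h2, (volume_preserving_piFinSuccAbove (fun _ : Fin (m+3) => ℝ) 0).measure_preimage
      hWm.nullMeasurableSet]
    rfl
  rw [h1, h3, Measure.prod_apply hWm]
  -- Step 3: bound each slice
  have hslice : ∀ t : ℝ, volume (Prod.mk t ⁻¹' W)
      ≤ ENNReal.ofReal (Real.exp (-(t^2)/2) ^ (m+2)) * V := by
    intro t
    have hsub : Prod.mk t ⁻¹' W ⊆ {z : Fin (m+2) → ℝ | ∑ j, z j ^ 2 < (Real.exp (-(t^2)/2)) ^ 2} := by
      intro z hz
      simp only [Set.mem_preimage, Set.mem_setOf_eq, hW] at hz ⊢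
      have h4 : Real.exp (-(t^2)/2) ^ 2 = Real.exp (-(t^2)) := by
        rw [← Real.exp_nat_mul]; ring_nf
      have h5 : 1 - t^2 ≤ Real.exp (-(t^2)) := by
        have := Real.add_one_le_exp (-(t^2)); linarith
      rw [h4]; linarith
    calc volume (Prod.mk t ⁻¹' W) ≤ volume {z : Fin (m+2) → ℝ | ∑ j, z j ^ 2 < (Real.exp (-(t^2)/2)) ^ 2} :=
          measure_mono hsub
      _ = ENNReal.ofReal (Real.exp (-(t^2)/2) ^ (m+2)) * V := by
          rw [vol_sumSq (m+1) (Real.exp_pos _)]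
  calc (∫⁻ t, volume (Prod.mk t ⁻¹' W)) ≤ ∫⁻ t, ENNReal.ofReal (Real.exp (-(t^2)/2) ^ (m+2)) * V :=
        lintegral_mono hslice
    _ = (∫⁻ t, ENNReal.ofReal (Real.exp (-(((m:ℝ)+2)/2) * t^2))) * V := by
        rw [← lintegral_mul_const' V _ (by simp [hV, measure_ball_lt_top.ne])]
        refine lintegral_congr fun t => ?_
        congr 2
        rw [← Real.exp_nat_mul]
        push_cast
        ring_nf
    _ ≤ ENNReal.ofReal (Real.sqrt (2 * Real.pi / (m+2))) * V := by
        have hb : (0:ℝ) < ((m:ℝ)+2)/2 := by positivity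
        rw [← ofReal_integral_eq_lintegral_ofReal (integrable_exp_neg_mul_sq hb)
          (Filter.Eventually.of_forall fun x => (Real.exp_pos _).le)]
        refine mul_le_mul_left (ENNReal.ofReal_le_ofReal ?_) V
        rw [integral_gaussian]
        apply Real.sqrt_le_sqrt
        rw [div_div_eq_mul_div]
        ring_nf
        exact le_refl _

open Metric in
/-- Lower bound on the volume of a cap of the unit ball. -/
private lemma cap_vol_lower (m : ℕ) {α β : ℝ} (hα : 0 < α) (hβ : 0 < β)
    (hαβ0 : 0 ≤ α + β) (hαβ : (α+β)^2 < 1) :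
    ENNReal.ofReal (β * Real.sqrt (1 - (α+β)^2) ^ (m+2)) *
        volume (ball (0 : EuclideanSpace ℝ (Fin (m+2))) 1)
      ≤ volume {x : EuclideanSpace ℝ (Fin (m+3)) | ‖x‖ < 1 ∧ α < x 0} := by
  classical
  set V := volume (ball (0 : EuclideanSpace ℝ (Fin (m+2))) 1) with hV
  set γ := Real.sqrt (1 - (α+β)^2) with hγ
  have hγpos : 0 < γ := Real.sqrt_pos.2 (by nlinarith)
  -- translate to the pi-type
  have h1 : volume {x : EuclideanSpace ℝ (Fin (m+3)) | ‖x‖ < 1 ∧ α < x 0}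
      = volume {z : Fin (m+3) → ℝ | (∑ j, z j ^ 2 < 1) ∧ α < z 0} := by
    have hset : {z : Fin (m+3) → ℝ | (∑ j, z j ^ 2 < 1) ∧ α < z 0}
        = (WithLp.equiv 2 (Fin (m+3) → ℝ)).symm ⁻¹'
          {x : EuclideanSpace ℝ (Fin (m+3)) | ‖x‖ < 1 ∧ α < x 0} := by
      ext z
      simp only [Set.mem_setOf_eq, Set.mem_preimage]
      rw [EuclideanSpace.norm_eq, Real.sqrt_lt' one_pos]
      simp only [WithLp.equiv_symm_apply, WithLp.ofLp_toLp, Real.norm_eq_abs, sq_abs, one_pow]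
    have hmeas : MeasurableSet {x : EuclideanSpace ℝ (Fin (m+3)) | ‖x‖ < 1 ∧ α < x 0} := by
      rw [Set.setOf_and]
      refine MeasurableSet.inter ?_ ?_
      · exact (isOpen_lt continuous_norm continuous_const).measurableSet
      · exact measurableSet_lt measurable_const
          ((measurable_pi_apply 0).comp (WithLp.measurable_ofLp 2 (Fin (m+3) → ℝ)))
    rw [hset, WithLp.equiv_symm_apply, (PiLp.volume_preserving_toLp (Fin (m+3))).measure_preimage
      hmeas.nullMeasurableSet]
  -- split off first coordinate
  set W : Set (ℝ × (Fin (m+2) → ℝ)) := {p | (p.1^2 + ∑ j, p.2 j ^ 2 < 1) ∧ α < p.1} with hW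
  have hWm : MeasurableSet W := by
    rw [hW, Set.setOf_and]
    refine MeasurableSet.inter ?_ ?_
    · apply measurableSet_lt _ measurable_const
      exact (measurable_fst.pow_const 2).add
        (Finset.measurable_sum _ fun j _ => ((measurable_pi_apply j).comp measurable_snd).pow_const 2)
    · exact measurableSet_lt measurable_const measurable_fst
  have h2 : {z : Fin (m+3) → ℝ | (∑ j, z j ^ 2 < 1) ∧ α < z 0}
      = (MeasurableEquiv.piFinSuccAbove (fun _ : Fin (m+3) => ℝ) 0) ⁻¹' W := by
    ext z
    simp only [Set.mem_setOf_eq, Set.mem_preimage, hW]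
    rw [Fin.sum_univ_succ]
    exact Iff.rfl
  have h3 : volume {z : Fin (m+3) → ℝ | (∑ j, z j ^ 2 < 1) ∧ α < z 0}
      = ((volume : Measure ℝ).prod volume) W := by
    rw [h2, (volume_preserving_piFinSuccAbove (fun _ : Fin (m+3) => ℝ) 0).measure_preimage
      hWm.nullMeasurableSet]
    rfl
  -- the cylinder inside the cap
  have hsub : (Set.Ioo α (α+β)) ×ˢ {z : Fin (m+2) → ℝ | ∑ j, z j ^ 2 < γ ^ 2} ⊆ W := by
    rintro ⟨t, z⟩ ⟨ht, hz⟩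
    simp only [Set.mem_Ioo] at ht
    simp only [Set.mem_setOf_eq] at hz
    have hγsq : γ ^ 2 = 1 - (α+β)^2 := Real.sq_sqrt (by nlinarith)
    have ht2 : t^2 < (α+β)^2 := by nlinarith [ht.1, ht.2, hα]
    exact ⟨by nlinarith, ht.1⟩
  calc ENNReal.ofReal (β * γ ^ (m+2)) * V
      = ((volume : Measure ℝ).prod volume) ((Set.Ioo α (α+β)) ×ˢ {z : Fin (m+2) → ℝ | ∑ j, z j ^ 2 < γ ^ 2}) := by
        rw [Measure.prod_prod, Real.volume_Ioo, vol_sumSq (m+1) hγpos,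
          show α + β - α = β by ring, ← mul_assoc, ← ENNReal.ofReal_mul hβ.le]
    _ ≤ ((volume : Measure ℝ).prod volume) W := measure_mono hsub
    _ = volume {x : EuclideanSpace ℝ (Fin (m+3)) | ‖x‖ < 1 ∧ α < x 0} := by rw [← h3, ← h1]

open Metric Pointwise in
/-- Reduction of the sphere measure bound to a volume bound. -/
private lemma sphere_reduce (m : ℕ) (θ : EuclideanSpace ℝ (Fin (m+3))) (hθ : ‖θ‖ = 1)
    {α X : ℝ} (hα : 0 < α)
    (h : ENNReal.ofReal X * volume (ball (0 : EuclideanSpace ℝ (Fin (m+3))) 1)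
        ≤ volume {x : EuclideanSpace ℝ (Fin (m+3)) | ‖x‖ < 1 ∧ α < ⟪x, θ⟫}) :
    ENNReal.ofReal X ≤ sphereUniform (m+3) {P | α < |⟪P, θ⟫|} := by
  classical
  set T : Set (EuclideanSpace ℝ (Fin (m+3))) := {P | α < |⟪P, θ⟫|} with hT
  have hinner : Continuous fun x : EuclideanSpace ℝ (Fin (m+3)) => ⟪x, θ⟫ := continuous_id.inner continuous_const
  have hTm : MeasurableSet T := measurableSet_lt measurable_const hinner.abs.measurable
  set A : Set (sphere (0:EuclideanSpace ℝ (Fin (m+3))) 1) := Subtype.val ⁻¹' T with hA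
  have hAm : MeasurableSet A := hTm.preimage measurable_subtype_coe
  set D : Set (EuclideanSpace ℝ (Fin (m+3))) := {x | ‖x‖ < 1 ∧ α < ⟪x, θ⟫} with hD
  set a := volume (ball (0:EuclideanSpace ℝ (Fin (m+3))) 1) with ha
  set N : ENNReal := ((m+3 : ℕ) : ENNReal) with hN
  have hNa0 : N * a ≠ 0 := by
    simp only [ne_eq, mul_eq_zero, not_or]
    exact ⟨by simp [hN], (measure_ball_pos _ _ one_pos).ne'⟩
  have hNaT : N * a ≠ ⊤ := ENNReal.mul_ne_top (ENNReal.natCast_ne_top _) measure_ball_lt_top.ne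
  -- the cone inclusion
  have hcone : D ⊆ Set.Ioo (0:ℝ) 1 • (Subtype.val '' A) := by
    intro x hx
    obtain ⟨hx1, hx2⟩ := hx
    have hip : 0 < ⟪x, θ⟫ := lt_trans hα hx2
    have hx0 : x ≠ 0 := by
      rintro rfl
      rw [inner_zero_left] at hip
      exact lt_irrefl 0 hip
    have hnx : 0 < ‖x‖ := norm_pos_iff.2 hx0
    set p : EuclideanSpace ℝ (Fin (m+3)) := ‖x‖⁻¹ • x with hp
    have hps : p ∈ sphere (0:EuclideanSpace ℝ (Fin (m+3))) 1 := by
      rw [mem_sphere_zero_iff_norm, hp, norm_smul, norm_inv, norm_norm, inv_mul_cancel₀ hnx.ne']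
    have hinvge : 1 ≤ ‖x‖⁻¹ := (one_le_inv₀ hnx).2 hx1.le
    have hpT : p ∈ T := by
      rw [hT, Set.mem_setOf_eq, hp, real_inner_smul_left]
      have : ⟪x, θ⟫ ≤ ‖x‖⁻¹ * ⟪x, θ⟫ := le_mul_of_one_le_left hip.le hinvge
      calc α < ⟪x, θ⟫ := hx2
        _ ≤ ‖x‖⁻¹ * ⟪x, θ⟫ := this
        _ ≤ |‖x‖⁻¹ * ⟪x, θ⟫| := le_abs_self _
    refine Set.mem_smul.2 ⟨‖x‖, ⟨hnx, hx1⟩, p, ⟨⟨p, hps⟩, hpT, rfl⟩, ?_⟩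
    show ‖x‖ • p = x
    rw [hp, smul_inv_smul₀ hnx.ne']
  -- compute the sphere measure
  have hmap : sphereUniform (m+3) T = (N * a)⁻¹ * (volume : Measure (EuclideanSpace ℝ (Fin (m+3)))).toSphere A := by
    rw [sphereUniform, Measure.map_apply measurable_subtype_coe hTm, Measure.smul_apply,
      smul_eq_mul, Measure.toSphere_apply_univ, finrank_euclideanSpace_fin]
  have htsA : N * volume D ≤ (volume : Measure (EuclideanSpace ℝ (Fin (m+3)))).toSphere A := by
    rw [Measure.toSphere_apply' _ hAm, finrank_euclideanSpace_fin]
    exact mul_le_mul_right (measure_mono hcone) N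
  rw [hmap]
  calc ENNReal.ofReal X
      = (N * a)⁻¹ * (ENNReal.ofReal X * (N * a)) := by
        rw [mul_comm (ENNReal.ofReal X), ← mul_assoc, ENNReal.inv_mul_cancel hNa0 hNaT, one_mul]
    _ ≤ (N * a)⁻¹ * (volume : Measure (EuclideanSpace ℝ (Fin (m+3)))).toSphere A := by
        refine mul_le_mul_right ?_ _
        calc ENNReal.ofReal X * (N * a) = N * (ENNReal.ofReal X * a) := by ring
          _ ≤ N * volume D := mul_le_mul_right h N
          _ ≤ (volume : Measure (EuclideanSpace ℝ (Fin (m+3)))).toSphere A := htsA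


private lemma exp_neg_half_ge : (1:ℝ)/2 ≤ Real.exp (-(1/2)) := by
  have he : Real.exp (1/2)^2 = Real.exp 1 := by rw [← Real.exp_nat_mul]; norm_num
  have he1 : Real.exp 1 < 4 := lt_trans Real.exp_one_lt_d9 (by norm_num)
  have he2 : Real.exp (1/2) ≤ 2 := by
    nlinarith [Real.exp_pos (1/2), sq_nonneg (Real.exp (1/2) - 2)]
  rw [Real.exp_neg, le_inv_comm₀ (by norm_num : (0:ℝ) < 1/2) (Real.exp_pos _)]
  calc Real.exp (1/2) ≤ 2 := he2
    _ = (1/2 : ℝ)⁻¹ := by norm_num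

set_option maxHeartbeats 1000000 in
private lemma key_real (m : ℕ) {α : ℝ} (hα : 0 < α) (hα4 : α ≤ 1/4) :
    (1/20) * Real.exp (-4 * α^2 * ((m:ℝ)+3)) * Real.sqrt (2 * Real.pi / (m+2))
      ≤ (1/(2*Real.sqrt ((m:ℝ)+3))) *
        Real.sqrt (1 - (α + 1/(2*Real.sqrt ((m:ℝ)+3)))^2) ^ (m+2) := by
  have hm0 : (0:ℝ) ≤ (m:ℝ) := Nat.cast_nonneg m
  set s := Real.sqrt ((m:ℝ)+3) with hsdef
  have hs0 : 0 < s := Real.sqrt_pos.2 (by linarith)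
  have hs2 : s^2 = (m:ℝ)+3 := Real.sq_sqrt (by linarith)
  set β : ℝ := 1/(2*s) with hβdef
  have hβ0 : 0 < β := by positivity
  have hβsq : ((m:ℝ)+3) * β^2 = 1/4 := by
    rw [hβdef]
    field_simp
    nlinarith [hs2]
  set u := (α+β)^2 with hudef
  have hu0 : 0 ≤ u := sq_nonneg _
  have hu_le : ((m:ℝ)+3) * u ≤ 2*α^2*((m:ℝ)+3) + 1/2 := by
    have h1 : u ≤ 2*α^2 + 2*β^2 := by nlinarith [sq_nonneg (α-β)]
    nlinarith [mul_le_mul_of_nonneg_left h1 (by linarith : (0:ℝ) ≤ (m:ℝ)+3), hβsq]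
  have hu2 : u ≤ 1/2 := by
    have h2 : ((m:ℝ)+3) * u ≥ 3 * u := by nlinarith
    have h3 : 2*α^2*((m:ℝ)+3) + 1/2 ≤ 2*α^2*((m:ℝ)+3) + 1/2 := le_refl _
    -- u ≤ (2α²(m+3)+1/2)/(m+3) ≤ 2α² + 1/6 ≤ 1/8+1/6 < 1/2
    have h4 : u ≤ 2*α^2 + 2*β^2 := by nlinarith [sq_nonneg (α-β)]
    have h5 : β^2 ≤ 1/12 := by nlinarith [hβsq]
    nlinarith
  set γ := Real.sqrt (1-u) with hγdef
  have hγ0 : 0 < γ := Real.sqrt_pos.2 (by linarith)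
  have hexp : Real.exp (-u) ≤ γ := by
    have h1 : Real.exp (-u)^2 = Real.exp (-(2*u)) := by
      rw [← Real.exp_nat_mul]; ring_nf
    have h2 : Real.exp (-(2*u)) ≤ 1 - u := by
      have h3 := Real.add_one_le_exp (2*u)
      have h4 : (0:ℝ) < 1 - u := by linarith
      rw [Real.exp_neg, inv_le_comm₀ (Real.exp_pos _) h4]
      have h5 : (1-u) * (1-u)⁻¹ = 1 := mul_inv_cancel₀ h4.ne'
      have h6 : (0:ℝ) ≤ (1-u)⁻¹ := inv_nonneg.2 h4.le
      nlinarith [mul_nonneg h6 hu0, mul_nonneg (mul_nonneg h6 hu0) hu0]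
    calc Real.exp (-u) = Real.sqrt (Real.exp (-u)^2) := (Real.sqrt_sq (Real.exp_pos _).le).symm
      _ ≤ γ := by rw [hγdef]; exact Real.sqrt_le_sqrt (by rw [h1]; exact h2)
  have hγpow : Real.exp (-(2*α^2*((m:ℝ)+3) + 1/2)) ≤ γ^(m+2) := by
    calc Real.exp (-(2*α^2*((m:ℝ)+3) + 1/2))
        ≤ Real.exp (-(((m:ℝ)+2)*u)) := by
          apply Real.exp_le_exp.2
          have : ((m:ℝ)+2)*u ≤ ((m:ℝ)+3)*u := by nlinarith
          linarith
      _ = Real.exp (-u)^(m+2) := by rw [← Real.exp_nat_mul]; congr 1; push_cast; ring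
      _ ≤ γ^(m+2) := pow_le_pow_left₀ (Real.exp_pos _).le hexp _
  have hhalf : (1:ℝ)/2 ≤ Real.exp (-(1/2)) := exp_neg_half_ge
  have hnum : (1/20) * Real.sqrt (2*Real.pi/((m:ℝ)+2)) ≤ 1/(4*s) := by
    have hππ : Real.pi < 3.15 := Real.pi_lt_d2
    have h6 : Real.sqrt (2*Real.pi/((m:ℝ)+2)) * s = Real.sqrt (2*Real.pi/((m:ℝ)+2) * ((m:ℝ)+3)) := by
      rw [hsdef, ← Real.sqrt_mul (by positivity)]
    have h7 : 2*Real.pi/((m:ℝ)+2) * ((m:ℝ)+3) ≤ 25 := by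
      rw [div_mul_eq_mul_div, div_le_iff₀ (by positivity)]
      nlinarith [Real.pi_pos, mul_le_mul_of_nonneg_right hππ.le hm0]
    have h9 : Real.sqrt (2*Real.pi/((m:ℝ)+2)) * s ≤ 5 := by
      rw [h6]
      calc Real.sqrt (2*Real.pi/((m:ℝ)+2) * ((m:ℝ)+3)) ≤ Real.sqrt 25 := Real.sqrt_le_sqrt h7
        _ = 5 := by rw [show (25:ℝ) = 5^2 by norm_num, Real.sqrt_sq (by norm_num)]
    rw [le_div_iff₀ (by positivity : (0:ℝ) < 4*s)]
    have h10 : 1/20 * Real.sqrt (2*Real.pi/((m:ℝ)+2)) * (4*s)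
        = (Real.sqrt (2*Real.pi/((m:ℝ)+2)) * s) / 5 := by ring
    rw [h10]
    linarith
  -- assemble
  have hE2 : Real.exp (-(2*α^2*((m:ℝ)+3) + 1/2))
      = Real.exp (-(2*α^2*((m:ℝ)+3))) * Real.exp (-(1/2)) := by
    rw [← Real.exp_add]; ring_nf
  have hEmono : Real.exp (-4*α^2*((m:ℝ)+3)) ≤ Real.exp (-(2*α^2*((m:ℝ)+3))) := by
    apply Real.exp_le_exp.2
    nlinarith [sq_nonneg α]
  have hγge : Real.exp (-(2*α^2*((m:ℝ)+3))) * (1/2) ≤ γ^(m+2) := by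
    calc Real.exp (-(2*α^2*((m:ℝ)+3))) * (1/2)
        ≤ Real.exp (-(2*α^2*((m:ℝ)+3))) * Real.exp (-(1/2)) :=
          mul_le_mul_of_nonneg_left hhalf (Real.exp_pos _).le
      _ = Real.exp (-(2*α^2*((m:ℝ)+3) + 1/2)) := hE2.symm
      _ ≤ γ^(m+2) := hγpow
  calc (1/20) * Real.exp (-4 * α^2 * ((m:ℝ)+3)) * Real.sqrt (2 * Real.pi / ((m:ℝ)+2))
      = Real.exp (-4 * α^2 * ((m:ℝ)+3)) * ((1/20) * Real.sqrt (2 * Real.pi / ((m:ℝ)+2))) := by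
        ring
    _ ≤ Real.exp (-4 * α^2 * ((m:ℝ)+3)) * (1/(4*s)) :=
        mul_le_mul_of_nonneg_left hnum (Real.exp_pos _).le
    _ ≤ Real.exp (-(2*α^2*((m:ℝ)+3))) * (1/(4*s)) :=
        mul_le_mul_of_nonneg_right hEmono (by positivity)
    _ = (1/(2*s)) * (Real.exp (-(2*α^2*((m:ℝ)+3))) * (1/2)) := by ring
    _ ≤ (1/(2*s)) * γ^(m+2) := mul_le_mul_of_nonneg_left hγge (by positivity)


theorem stmt7 :
    ∃ c c' : ℝ, 0 < c ∧ 0 < c' ∧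
      ∀ (n : ℕ), 3 ≤ n → ∀ θ : EuclideanSpace ℝ (Fin n), ‖θ‖ = 1 →
        ∀ α : ℝ, c / Real.sqrt n ≤ α → α ≤ 1 / 4 →
          ENNReal.ofReal (c' * Real.exp (-4 * α ^ 2 * n)) ≤
            sphereUniform n {P | α < |⟪P, θ⟫|} := by
  refine ⟨1, 1/20, one_pos, by norm_num, ?_⟩
  intro n hn θ hθ α hαl hα4
  obtain ⟨m, rfl⟩ : ∃ m, n = m + 3 := ⟨n - 3, by omega⟩
  have hsn : (0:ℝ) < Real.sqrt ((m:ℝ)+3) := Real.sqrt_pos.2 (by positivity)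
  push_cast at hαl
  have hα : 0 < α := lt_of_lt_of_le (by positivity : (0:ℝ) < 1 / Real.sqrt ((m:ℝ)+3)) hαl
  have hm0 : (0:ℝ) ≤ (m:ℝ) := Nat.cast_nonneg m
  have hs1 : (1:ℝ) ≤ Real.sqrt ((m:ℝ)+3) := by
    rw [show (1:ℝ) = Real.sqrt 1 from Real.sqrt_one.symm]
    exact Real.sqrt_le_sqrt (by linarith)
  have hβ : (0:ℝ) < 1/(2*Real.sqrt ((m:ℝ)+3)) := by positivity
  have hβle : 1/(2*Real.sqrt ((m:ℝ)+3)) ≤ 1/2 := by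
    apply one_div_le_one_div_of_le
    · norm_num
    · linarith
  have hαβsq : (α + 1/(2*Real.sqrt ((m:ℝ)+3)))^2 < 1 := by nlinarith
  apply sphere_reduce m θ hθ hα
  push_cast
  calc ENNReal.ofReal (1 / 20 * Real.exp (-4 * α ^ 2 * ((m:ℝ) + 3))) *
        volume (Metric.ball (0 : EuclideanSpace ℝ (Fin (m+3))) 1)
      ≤ ENNReal.ofReal (1 / 20 * Real.exp (-4 * α ^ 2 * ((m:ℝ) + 3))) *
        (ENNReal.ofReal (Real.sqrt (2 * Real.pi / (m+2))) *
          volume (Metric.ball (0 : EuclideanSpace ℝ (Fin (m+2))) 1)) :=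
        mul_le_mul_right (ball_vol_upper m) _
    _ = ENNReal.ofReal (1 / 20 * Real.exp (-4 * α ^ 2 * ((m:ℝ) + 3)) *
          Real.sqrt (2 * Real.pi / (m+2))) *
        volume (Metric.ball (0 : EuclideanSpace ℝ (Fin (m+2))) 1) := by
        rw [← mul_assoc, ← ENNReal.ofReal_mul (by positivity)]
    _ ≤ ENNReal.ofReal ((1/(2*Real.sqrt ((m:ℝ)+3))) *
          Real.sqrt (1 - (α + 1/(2*Real.sqrt ((m:ℝ)+3)))^2) ^ (m+2)) *
        volume (Metric.ball (0 : EuclideanSpace ℝ (Fin (m+2))) 1) :=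
        mul_le_mul_left (ENNReal.ofReal_le_ofReal (key_real m hα hα4)) _
    _ ≤ volume {x : EuclideanSpace ℝ (Fin (m+3)) | ‖x‖ < 1 ∧ α < x 0} :=
        cap_vol_lower m hα hβ (by positivity) hαβsq
    _ = volume {x : EuclideanSpace ℝ (Fin (m+3)) | ‖x‖ < 1 ∧ α < ⟪x, θ⟫} := by
        have hθ₀ : ‖(EuclideanSpace.single (0 : Fin (m+3)) (1:ℝ))‖ = 1 := by
          rw [EuclideanSpace.norm_single]; norm_num
        set θ₀ : EuclideanSpace ℝ (Fin (m+3)) := EuclideanSpace.single (0 : Fin (m+3)) (1:ℝ)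
          with hθ₀def
        set g := Submodule.reflection (ℝ ∙ (θ - θ₀))ᗮ with hgdef
        have hg : g θ = θ₀ := Submodule.reflection_sub (by rw [hθ, hθ₀])
        have hDrot : {x : EuclideanSpace ℝ (Fin (m+3)) | ‖x‖ < 1 ∧ α < ⟪x, θ⟫}
            = ⇑g ⁻¹' {x : EuclideanSpace ℝ (Fin (m+3)) | ‖x‖ < 1 ∧ α < x 0} := by
          ext x
          simp only [Set.mem_setOf_eq, Set.mem_preimage]
          have h1 : ‖g x‖ = ‖x‖ := g.norm_map x
          have h2 : (g x) 0 = ⟪x, θ⟫ := by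
            have h3 : ⟪g x, θ₀⟫ = (g x) 0 := by
              rw [hθ₀def, EuclideanSpace.inner_single_right]; simp
            rw [← h3, ← hg, LinearIsometryEquiv.inner_map_map]
          rw [h1, h2]
        have hDm : MeasurableSet {x : EuclideanSpace ℝ (Fin (m+3)) | ‖x‖ < 1 ∧ α < x 0} := by
          rw [Set.setOf_and]
          refine MeasurableSet.inter ?_ ?_
          · exact (isOpen_lt continuous_norm continuous_const).measurableSet
          · exact measurableSet_lt measurable_const
              ((measurable_pi_apply 0).comp
                (WithLp.measurable_ofLp 2 (Fin (m+3) → ℝ)))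
        rw [hDrot, g.measurePreserving.measure_preimage hDm.nullMeasurableSet]
end

section
/- Let A be an absolute constant such that ‖√n⟨·,θ⟩‖_{ψ₂} ≤ A for all unit vectors θ. If P₁, …, P_n are independent random vectors uniformly distributed on S^{n−1}, then for every ε > 0, P{ |Σ_{i=1}^n P_i| < 2εn } ≥ 1 − 2·e^{−ε²n²/(8A²) + n·log 5}, where |·| is the Euclidean norm of the vector sum. -/
open MeasureTheory
open scoped RealInnerProductSpace

open Metric ProbabilityTheory Real
open scoped ENNReal
set_option maxHeartbeats 1000000


lemma toSphere_univ_ne_zero (n : ℕ) (hn : 1 ≤ n) :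
    (volume : Measure (EuclideanSpace ℝ (Fin n))).toSphere Set.univ ≠ 0 := by
  haveI : Nonempty (Fin n) := ⟨⟨0, hn⟩⟩
  rw [Measure.toSphere_apply_univ, finrank_euclideanSpace_fin]
  refine mul_ne_zero ?_ (measure_ball_pos volume (0:EuclideanSpace ℝ (Fin n)) one_pos).ne'
  exact_mod_cast Nat.one_le_iff_ne_zero.mp hn

lemma sphereUniform_isProb (n : ℕ) (hn : 1 ≤ n) :
    IsProbabilityMeasure (sphereUniform n) := by
  have h0 := toSphere_univ_ne_zero n hn
  have h1 : (volume : Measure (EuclideanSpace ℝ (Fin n))).toSphere Set.univ ≠ ⊤ :=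
    measure_ne_top _ _
  haveI : IsProbabilityMeasure
      ((((volume : Measure (EuclideanSpace ℝ (Fin n))).toSphere) Set.univ)⁻¹ •
        ((volume : Measure (EuclideanSpace ℝ (Fin n))).toSphere)) := by
    constructor
    rw [Measure.smul_apply, smul_eq_mul, ENNReal.inv_mul_cancel h0 h1]
  exact Measure.isProbabilityMeasure_map measurable_subtype_coe.aemeasurable

lemma sphereUniform_ae_norm (n : ℕ) :
    ∀ᵐ x ∂(sphereUniform n), ‖x‖ = 1 := by
  rw [sphereUniform, ae_map_iff measurable_subtype_coe.aemeasurable]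
  · filter_upwards with p using mem_sphere_zero_iff_norm.mp p.2
  · exact (isClosed_eq continuous_norm continuous_const).measurableSet

lemma net_exists (n : ℕ) (hn : 1 ≤ n) :
    ∃ N : Finset (EuclideanSpace ℝ (Fin n)),
      N.card ≤ 5 ^ n ∧ (∀ θ ∈ N, ‖θ‖ = 1) ∧
      ∀ x : EuclideanSpace ℝ (Fin n), ‖x‖ = 1 → ∃ θ ∈ N, dist x θ ≤ 1 / 2 := by
  classical
  set E := EuclideanSpace ℝ (Fin n)
  haveI : Nonempty (Fin n) := ⟨⟨0, hn⟩⟩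
  set S : Set (Set E) :=
    {s | s ⊆ sphere (0:E) 1 ∧ s.Pairwise fun a b => (1:ℝ)/2 ≤ dist a b} with hS
  obtain ⟨M, hM⟩ : ∃ m, Maximal (· ∈ S) m := by
    apply zorn_subset
    intro c hcS hchain
    refine ⟨⋃₀ c, ⟨Set.sUnion_subset fun s hs => (hcS hs).1, ?_⟩, fun s hs => Set.subset_sUnion_of_mem hs⟩
    intro a ha b hb hab
    obtain ⟨s, hs, has⟩ := ha
    obtain ⟨t, ht, hbt⟩ := hb
    rcases hchain.total hs ht with h | h
    · exact (hcS ht).2 (h has) hbt hab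
    · exact (hcS hs).2 has (h hbt) hab
  have hsub : M ⊆ sphere (0:E) 1 := hM.prop.1
  have hpair : M.Pairwise fun a b => (1:ℝ)/2 ≤ dist a b := hM.prop.2
  -- cardinality claim for finite subsets
  have hcard : ∀ F : Finset E, ↑F ⊆ M → F.card ≤ 5 ^ n := by
    intro F hF
    set v := volume (ball (0:E) 1) with hv
    have hv0 : v ≠ 0 := (measure_ball_pos volume _ one_pos).ne'
    have hvt : v ≠ ⊤ := measure_ball_lt_top.ne
    have hdisj : (↑F : Set E).PairwiseDisjoint fun x => ball x (1/4 : ℝ) := by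
      intro a ha b hb hab
      exact ball_disjoint_ball (by linarith [hpair (hF ha) (hF hb) hab])
    have hmeas : volume (⋃ x ∈ F, ball x (1/4 : ℝ)) = ∑ x ∈ F, volume (ball x (1/4 : ℝ)) :=
      measure_biUnion_finset hdisj fun _ _ => measurableSet_ball
    have hsubball : (⋃ x ∈ F, ball x (1/4 : ℝ)) ⊆ ball (0:E) (5/4) := by
      intro y hy
      simp only [Set.mem_iUnion] at hy
      obtain ⟨x, hx, hyx⟩ := hy
      have hx1 : ‖x‖ = 1 := mem_sphere_zero_iff_norm.mp (hsub (hF hx))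
      have : dist y (0:E) ≤ dist y x + dist x 0 := dist_triangle _ _ _
      rw [mem_ball, dist_zero_right] at *
      rw [dist_zero_right, hx1] at this
      linarith [mem_ball.mp hyx]
    have hballeq : ∀ x : E, volume (ball x (1/4 : ℝ)) = ENNReal.ofReal ((1/4:ℝ) ^ n) * v := by
      intro x
      rw [hv, Measure.addHaar_ball volume x (by norm_num : (0:ℝ) ≤ 1/4), finrank_euclideanSpace_fin]
    have hball2 : volume (ball (0:E) (5/4 : ℝ)) = ENNReal.ofReal ((5/4:ℝ) ^ n) * v := by
      rw [hv, Measure.addHaar_ball volume _ (by norm_num : (0:ℝ) ≤ 5/4), finrank_euclideanSpace_fin]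
    have key : (F.card : ℝ≥0∞) * (ENNReal.ofReal ((1/4:ℝ) ^ n) * v) ≤ ENNReal.ofReal ((5/4:ℝ) ^ n) * v := by
      calc (F.card : ℝ≥0∞) * (ENNReal.ofReal ((1/4:ℝ) ^ n) * v)
          = ∑ x ∈ F, volume (ball x (1/4 : ℝ)) := by
            rw [Finset.sum_congr rfl fun x _ => hballeq x, Finset.sum_const, nsmul_eq_mul]
        _ = volume (⋃ x ∈ F, ball x (1/4 : ℝ)) := hmeas.symm
        _ ≤ volume (ball (0:E) (5/4)) := measure_mono hsubball
        _ = _ := hball2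
    have h14 : ENNReal.ofReal ((1/4:ℝ) ^ n) ≠ 0 := by
      rw [Ne, ENNReal.ofReal_eq_zero, not_le]; positivity
    have h14t : ENNReal.ofReal ((1/4:ℝ) ^ n) ≠ ⊤ := ENNReal.ofReal_ne_top
    have key2 : (F.card : ℝ≥0∞) * ENNReal.ofReal ((1/4:ℝ) ^ n) ≤
        ENNReal.ofReal ((5:ℝ) ^ n) * ENNReal.ofReal ((1/4:ℝ) ^ n) := by
      have : ENNReal.ofReal ((5/4:ℝ) ^ n) = ENNReal.ofReal ((5:ℝ) ^ n) * ENNReal.ofReal ((1/4:ℝ) ^ n) := by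
        rw [← ENNReal.ofReal_mul (by positivity), ← mul_pow]; norm_num
      rw [← mul_assoc] at key
      exact (ENNReal.mul_le_mul_iff_left hv0 hvt).mp (by rw [this] at key; exact key)
    have key3 : (F.card : ℝ≥0∞) ≤ ENNReal.ofReal ((5:ℝ) ^ n) :=
      (ENNReal.mul_le_mul_iff_left h14 h14t).mp key2
    have : ((5:ℝ) ^ n) = ((5 ^ n : ℕ) : ℝ) := by push_cast; ring
    rw [this, ENNReal.ofReal_natCast] at key3
    exact_mod_cast key3
  -- finiteness
  have hfin : M.Finite := by
    by_contra hinf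
    obtain ⟨t, htM, htfin, htcard⟩ := Set.Infinite.exists_subset_ncard_eq hinf (5 ^ n + 1)
    have := hcard htfin.toFinset (by simpa using htM)
    rw [Set.ncard_eq_toFinset_card t htfin] at htcard
    omega
  refine ⟨hfin.toFinset, hcard _ (by simp), ?_, ?_⟩
  · intro θ hθ
    exact mem_sphere_zero_iff_norm.mp (hsub (hfin.mem_toFinset.mp hθ))
  · intro x hx
    by_contra h
    push_neg at h
    have h' : ∀ θ ∈ M, (1:ℝ)/2 < dist x θ := by
      intro θ hθ
      exact h θ (hfin.mem_toFinset.mpr hθ)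
    have hxM : x ∉ M := fun hxM => by have := h' x hxM; rw [dist_self] at this; linarith
    have hins : insert x M ∈ S := by
      constructor
      · exact Set.insert_subset (mem_sphere_zero_iff_norm.mpr hx) hsub
      · haveI : Std.Symm (fun a b : E => (1:ℝ)/2 ≤ dist a b) := by
          constructor
          intro a b hab
          rwa [dist_comm]
        refine Set.pairwise_insert_of_symmetric |>.mpr ⟨hpair, fun b hb hne => (h' b hb).le⟩
    have := hM.2 hins (Set.subset_insert x M)
    exact hxM (this (Set.mem_insert x M))

lemma sphere_mgf (n : ℕ) (hn : 1 ≤ n) (A : ℝ) (hA : 0 < A)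
    (θ : EuclideanSpace ℝ (Fin n)) (hθ : ‖θ‖ = 1)
    (hpsi2 : ∫ P, Real.exp (n * |⟪P, θ⟫| ^ 2 / A ^ 2) ∂(sphereUniform n) ≤ 2)
    (t : ℝ) :
    ∫ x, Real.exp (t * ⟪x, θ⟫) ∂(sphereUniform n) ≤ 2 * Real.exp (t^2 * A^2 / (4*n)) := by
  haveI := sphereUniform_isProb n hn
  have hn0 : (0:ℝ) < n := by exact_mod_cast hn
  set C := Real.exp (t^2 * A^2 / (4*n)) with hC
  have hC0 : 0 < C := Real.exp_pos _
  have hcont : Continuous fun x : EuclideanSpace ℝ (Fin n) => ⟪x, θ⟫ :=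
    continuous_id.inner continuous_const
  have hcontg : Continuous fun x : EuclideanSpace ℝ (Fin n) =>
      Real.exp (n * |⟪x, θ⟫| ^ 2 / A ^ 2) * C := by
    fun_prop
  have hpt : ∀ x : EuclideanSpace ℝ (Fin n),
      Real.exp (t * ⟪x, θ⟫) ≤ Real.exp (n * |⟪x, θ⟫| ^ 2 / A ^ 2) * C := by
    intro x
    rw [hC, ← Real.exp_add, Real.exp_le_exp]
    set y := ⟪x, θ⟫
    rw [sq_abs]
    rw [div_add_div _ _ (by positivity : (A:ℝ)^2 ≠ 0) (by positivity : 4*(n:ℝ) ≠ 0), le_div_iff₀ (by positivity)]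
    nlinarith [sq_nonneg (2*n*y - t*A^2), sq_nonneg y, hA.le]
  have hintg : Integrable (fun x : EuclideanSpace ℝ (Fin n) =>
      Real.exp (n * |⟪x, θ⟫| ^ 2 / A ^ 2) * C) (sphereUniform n) := by
    refine Integrable.mono' (integrable_const (Real.exp (n / A ^ 2) * C))
      hcontg.aestronglyMeasurable ?_
    filter_upwards [sphereUniform_ae_norm n] with x hx
    rw [Real.norm_eq_abs, abs_mul, abs_of_pos hC0, Real.abs_exp]
    have h1 : |⟪x, θ⟫| ≤ 1 := by
      have := abs_real_inner_le_norm x θ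
      rw [hx, hθ] at this; simpa using this
    have : (n:ℝ) * |⟪x, θ⟫| ^ 2 / A ^ 2 ≤ n / A ^ 2 := by
      rw [div_le_div_iff₀ (by positivity) (by positivity)]
      have h2 : |⟪x, θ⟫| ^ 2 ≤ 1 := pow_le_one₀ (abs_nonneg _) h1
      nlinarith [mul_le_mul_of_nonneg_right (mul_le_mul_of_nonneg_left h2 hn0.le) (sq_nonneg A)]
    exact mul_le_mul_of_nonneg_right (Real.exp_le_exp.mpr this) hC0.le
  calc ∫ x, Real.exp (t * ⟪x, θ⟫) ∂(sphereUniform n)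
      ≤ ∫ x, Real.exp (n * |⟪x, θ⟫| ^ 2 / A ^ 2) * C ∂(sphereUniform n) := by
        refine integral_mono_of_nonneg ?_ hintg ?_
        · filter_upwards with x using (Real.exp_pos _).le
        · filter_upwards with x using hpt x
    _ = (∫ x, Real.exp (n * |⟪x, θ⟫| ^ 2 / A ^ 2) ∂(sphereUniform n)) * C :=
        integral_mul_const _ _
    _ ≤ 2 * C := mul_le_mul_of_nonneg_right hpsi2 hC0.le

set_option maxHeartbeats 1000000 in
lemma chernoff (A : ℝ) (hA : 0 < A) (n : ℕ) (hn : 1 ≤ n)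
    {Ω : Type} [MeasurableSpace Ω] {μ : Measure Ω} (hμ : IsProbabilityMeasure μ)
    (P : Fin n → Ω → EuclideanSpace ℝ (Fin n)) (hmeas : ∀ i, Measurable (P i))
    (hindep : ProbabilityTheory.iIndepFun P μ)
    (hdist : ∀ i, Measure.map (P i) μ = sphereUniform n)
    (θ : EuclideanSpace ℝ (Fin n)) (hθ : ‖θ‖ = 1)
    (hpsi2 : ∫ x, Real.exp (n * |⟪x, θ⟫| ^ 2 / A ^ 2) ∂(sphereUniform n) ≤ 2)
    (ε : ℝ) (hε : 0 < ε) :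
    μ {ω | ε * n ≤ ⟪∑ i, P i ω, θ⟫} ≤
      ENNReal.ofReal (2 ^ n * Real.exp (-(ε ^ 2 * n ^ 2) / A ^ 2)) := by
  have hn0 : (0:ℝ) < n := by exact_mod_cast hn
  set X : Fin n → Ω → ℝ := fun i ω => ⟪P i ω, θ⟫ with hX
  have hinnercont : Continuous fun v : EuclideanSpace ℝ (Fin n) => ⟪v, θ⟫ :=
    continuous_id.inner continuous_const
  have hXmeas : ∀ i, Measurable (X i) := fun i => hinnercont.measurable.comp (hmeas i)
  have hXindep : ProbabilityTheory.iIndepFun X μ :=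
    hindep.comp (fun _ v => ⟪v, θ⟫) (fun _ => hinnercont.measurable)
  have hnorm : ∀ i, ∀ᵐ ω ∂μ, ‖P i ω‖ = 1 := by
    intro i
    have h := sphereUniform_ae_norm n
    rw [← hdist i] at h
    exact (ae_map_iff (hmeas i).aemeasurable
      ((isClosed_eq continuous_norm continuous_const).measurableSet)).mp h
  have hXbd : ∀ i, ∀ᵐ ω ∂μ, |X i ω| ≤ 1 := by
    intro i
    filter_upwards [hnorm i] with ω hω
    have := abs_real_inner_le_norm (P i ω) θ
    rw [hω, hθ] at this; simpa using this
  set t : ℝ := 2 * ε * n / A ^ 2 with ht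
  have ht0 : 0 ≤ t := by positivity
  have hint : ∀ i, Integrable (fun ω => Real.exp (t * X i ω)) μ := by
    intro i
    refine Integrable.mono' (integrable_const (Real.exp t)) ?_ ?_
    · exact ((hXmeas i).const_mul t).exp.aestronglyMeasurable
    · filter_upwards [hXbd i] with ω hω
      rw [Real.norm_eq_abs, Real.abs_exp, Real.exp_le_exp]
      nlinarith [le_abs_self (X i ω), abs_nonneg (X i ω)]
  have hintsum : Integrable (fun ω => Real.exp (t * (∑ i, X i) ω)) μ := by
    refine Integrable.mono' (integrable_const (Real.exp (t * n))) ?_ ?_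
    · have hfun : (fun ω => Real.exp (t * (∑ i, X i) ω)) =
          fun ω => Real.exp (t * ∑ i, X i ω) := by
        funext ω; rw [Finset.sum_apply]
      rw [hfun]
      exact (((Finset.univ.measurable_sum fun i _ => hXmeas i)).const_mul t).exp.aestronglyMeasurable
    · have hall : ∀ᵐ ω ∂μ, ∀ i, |X i ω| ≤ 1 := ae_all_iff.mpr hXbd
      filter_upwards [hall] with ω hω
      rw [Real.norm_eq_abs, Real.abs_exp, Real.exp_le_exp, Finset.sum_apply]
      have habs : |∑ i, X i ω| ≤ n := by
        calc |∑ i, X i ω| ≤ ∑ i, |X i ω| := Finset.abs_sum_le_sum_abs _ _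
          _ ≤ ∑ _i : Fin n, (1:ℝ) := Finset.sum_le_sum fun i _ => hω i
          _ = n := by simp
      nlinarith [le_abs_self (∑ i, X i ω)]
  have hset : {ω | ε * n ≤ ⟪∑ i, P i ω, θ⟫} = {ω | ε * n ≤ (∑ i, X i) ω} := by
    ext ω
    simp only [Set.mem_setOf_eq, Finset.sum_apply, hX, sum_inner]
  have key : (μ {ω | ε * n ≤ (∑ i, X i) ω}).toReal ≤
      Real.exp (-t * (ε * n)) * ProbabilityTheory.mgf (∑ i, X i) μ t :=
    ProbabilityTheory.measure_ge_le_exp_mul_mgf (ε * n) ht0 hintsum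
  have hmgfsum : ProbabilityTheory.mgf (∑ i, X i) μ t = ∏ i, ProbabilityTheory.mgf (X i) μ t :=
    hXindep.mgf_sum hXmeas Finset.univ
  have hmgfi : ∀ i, ProbabilityTheory.mgf (X i) μ t ≤ 2 * Real.exp (t ^ 2 * A ^ 2 / (4 * n)) := by
    intro i
    have : ProbabilityTheory.mgf (X i) μ t = ∫ x, Real.exp (t * ⟪x, θ⟫) ∂(sphereUniform n) := by
      have hsm : AEStronglyMeasurable (fun x : EuclideanSpace ℝ (Fin n) => Real.exp (t * ⟪x, θ⟫))
          (Measure.map (P i) μ) := Continuous.aestronglyMeasurable (by fun_prop)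
      rw [ProbabilityTheory.mgf, ← hdist i, integral_map (hmeas i).aemeasurable hsm]
    rw [this]
    exact sphere_mgf n hn A hA θ hθ hpsi2 t
  have hprod : ∏ i, ProbabilityTheory.mgf (X i) μ t ≤
      (2 * Real.exp (t ^ 2 * A ^ 2 / (4 * n))) ^ n := by
    calc ∏ i, ProbabilityTheory.mgf (X i) μ t
        ≤ ∏ _i : Fin n, (2 * Real.exp (t ^ 2 * A ^ 2 / (4 * n))) :=
          Finset.prod_le_prod (fun i _ => ProbabilityTheory.mgf_nonneg) (fun i _ => hmgfi i)
      _ = _ := by simp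
  have harith : Real.exp (-t * (ε * n)) * (2 * Real.exp (t ^ 2 * A ^ 2 / (4 * n))) ^ n
      = 2 ^ n * Real.exp (-(ε ^ 2 * n ^ 2) / A ^ 2) := by
    rw [mul_pow, ← Real.exp_nat_mul]
    rw [← mul_assoc, mul_comm (Real.exp (-t * (ε * n))) ((2:ℝ) ^ n), mul_assoc, ← Real.exp_add]
    congr 1
    rw [ht]
    field_simp
    ring
  have final : (μ {ω | ε * n ≤ (∑ i, X i) ω}).toReal ≤
      2 ^ n * Real.exp (-(ε ^ 2 * n ^ 2) / A ^ 2) := by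
    calc (μ {ω | ε * n ≤ (∑ i, X i) ω}).toReal
        ≤ Real.exp (-t * (ε * n)) * ProbabilityTheory.mgf (∑ i, X i) μ t := key
      _ ≤ Real.exp (-t * (ε * n)) * (2 * Real.exp (t ^ 2 * A ^ 2 / (4 * n))) ^ n := by
          rw [hmgfsum]
          exact mul_le_mul_of_nonneg_left hprod (Real.exp_nonneg _)
      _ = _ := harith
  rw [hset]
  exact (ENNReal.le_ofReal_iff_toReal_le (measure_ne_top μ _) (by positivity)).mpr final


/-- If `A` is an absolute constant witnessing the uniform `ψ₂`-bound
`‖√n ⟨·, θ⟩‖_{ψ₂} ≤ A` for all unit vectors `θ`, and `P₁, …, P_n` are independent random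
vectors uniformly distributed on the sphere, then `|∑ P_i| < 2εn` with probability at
least `1 - 2 exp(-ε²n²/(8A²) + n log 5)`. -/
theorem stmt9 (A : ℝ) (hA : 0 < A)
    (hpsi : ∀ (k : ℕ), 1 ≤ k → ∀ θ : EuclideanSpace ℝ (Fin k), ‖θ‖ = 1 →
      ∫ P, Real.exp (k * |⟪P, θ⟫| ^ 2 / A ^ 2) ∂(sphereUniform k) ≤ 2)
    (n : ℕ) (hn : 1 ≤ n)
    (Ω : Type) (_ : MeasurableSpace Ω) (μ : Measure Ω) (hμ : IsProbabilityMeasure μ)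
    (P : Fin n → Ω → EuclideanSpace ℝ (Fin n))
    (hmeas : ∀ i, Measurable (P i))
    (hindep : ProbabilityTheory.iIndepFun P μ)
    (hdist : ∀ i, Measure.map (P i) μ = sphereUniform n)
    (ε : ℝ) (hε : 0 < ε) :
    ENNReal.ofReal (1 - 2 * Real.exp (-(ε ^ 2 * n ^ 2) / (8 * A ^ 2) + n * Real.log 5)) ≤
      μ {ω | ‖∑ i, P i ω‖ < 2 * ε * n} := by
  classical
  have hn0 : (0:ℝ) < n := by exact_mod_cast hn
  set Eexp : ℝ := -(ε ^ 2 * n ^ 2) / (8 * A ^ 2) + n * Real.log 5 with hEexp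
  by_cases hcase : 1 - 2 * Real.exp Eexp ≤ 0
  · rw [ENNReal.ofReal_eq_zero.mpr hcase]
    exact zero_le
  push_neg at hcase
  -- the bad event
  set bad : Set Ω := {ω | 2 * ε * n ≤ ‖∑ i, P i ω‖} with hbaddef
  have hSmeas : Measurable fun ω => ∑ i, P i ω :=
    Finset.univ.measurable_sum fun i _ => hmeas i
  have hbadmeas : MeasurableSet bad :=
    measurableSet_le measurable_const hSmeas.norm
  obtain ⟨N, hNcard, hNnorm, hNcover⟩ := net_exists n hn
  -- bad event is covered by the directional events over the net
  have hsub : bad ⊆ ⋃ θ ∈ N, {ω | ε * n ≤ ⟪∑ i, P i ω, θ⟫} := by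
    intro ω hω
    have hω' : 2 * ε * (n:ℝ) ≤ ‖∑ i, P i ω‖ := hω
    have hpos : (0:ℝ) < 2 * ε * n := by positivity
    set S := ∑ i, P i ω with hSdef
    have hSne : ‖S‖ ≠ 0 := ne_of_gt (lt_of_lt_of_le hpos hω')
    set u : EuclideanSpace ℝ (Fin n) := ‖S‖⁻¹ • S with hudef
    have hu : ‖u‖ = 1 := by
      rw [hudef, norm_smul, norm_inv, norm_norm, inv_mul_cancel₀ hSne]
    obtain ⟨θ, hθN, hdistθ⟩ := hNcover u hu
    refine Set.mem_iUnion₂.mpr ⟨θ, hθN, ?_⟩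
    have h1 : ⟪S, u⟫ = ‖S‖ := by
      rw [hudef, real_inner_smul_right, real_inner_self_eq_norm_sq]
      field_simp
    have h2 : |⟪S, u - θ⟫| ≤ ‖S‖ * (1/2) := by
      refine (abs_real_inner_le_norm S (u - θ)).trans ?_
      have : ‖u - θ‖ ≤ 1/2 := by rw [← dist_eq_norm]; exact hdistθ
      exact mul_le_mul_of_nonneg_left this (norm_nonneg _)
    have h3 : ⟪S, θ⟫ = ⟪S, u⟫ - ⟪S, u - θ⟫ := by
      rw [inner_sub_right]; ring
    have h4 : ⟪S, u - θ⟫ ≤ ‖S‖ * (1/2) := (le_abs_self _).trans h2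
    show ε * (n:ℝ) ≤ ⟪S, θ⟫
    rw [h3, h1]
    linarith
  -- Chernoff bound for each direction and union bound
  have hbad : μ bad ≤
      ENNReal.ofReal ((5:ℝ) ^ n * (2 ^ n * Real.exp (-(ε ^ 2 * n ^ 2) / A ^ 2))) := by
    calc μ bad ≤ μ (⋃ θ ∈ N, {ω | ε * n ≤ ⟪∑ i, P i ω, θ⟫}) := measure_mono hsub
      _ ≤ ∑ θ ∈ N, μ {ω | ε * n ≤ ⟪∑ i, P i ω, θ⟫} := measure_biUnion_finset_le N _
      _ ≤ ∑ _θ ∈ N, ENNReal.ofReal (2 ^ n * Real.exp (-(ε ^ 2 * n ^ 2) / A ^ 2)) := by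
          refine Finset.sum_le_sum fun θ hθ => ?_
          exact chernoff A hA n hn hμ P hmeas hindep hdist θ (hNnorm θ hθ)
            (hpsi n hn θ (hNnorm θ hθ)) ε hε
      _ = (N.card : ℝ≥0∞) * ENNReal.ofReal (2 ^ n * Real.exp (-(ε ^ 2 * n ^ 2) / A ^ 2)) := by
          rw [Finset.sum_const, nsmul_eq_mul]
      _ ≤ ((5 ^ n : ℕ) : ℝ≥0∞) * ENNReal.ofReal (2 ^ n * Real.exp (-(ε ^ 2 * n ^ 2) / A ^ 2)) := by
          exact mul_le_mul_left (by exact_mod_cast hNcard) _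
      _ = ENNReal.ofReal ((5:ℝ) ^ n * (2 ^ n * Real.exp (-(ε ^ 2 * n ^ 2) / A ^ 2))) := by
          rw [← ENNReal.ofReal_natCast, ← ENNReal.ofReal_mul (by positivity)]
          congr 2
          push_cast
          ring
  -- arithmetic: the crude bound is at most the claimed bound in the nontrivial case
  have harith : (5:ℝ) ^ n * (2 ^ n * Real.exp (-(ε ^ 2 * n ^ 2) / A ^ 2)) ≤
      2 * Real.exp Eexp := by
    set b : ℝ := ε ^ 2 * n ^ 2 / (8 * A ^ 2) with hbdef
    have hb8 : ε ^ 2 * n ^ 2 / A ^ 2 = 8 * b := by rw [hbdef]; field_simp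
    have hlog2 : (0:ℝ) < Real.log 2 := Real.log_pos one_lt_two
    have hlog25 : Real.log 2 < Real.log 5 := Real.log_lt_log two_pos (by norm_num)
    have hEb : Eexp = -b + n * Real.log 5 := by rw [hEexp, hbdef]; ring_nf
    have hblb : (n:ℝ) * Real.log 5 + Real.log 2 < b := by
      have h12 : Real.exp Eexp < 1/2 := by linarith
      have := Real.exp_log (show (0:ℝ) < 1/2 by norm_num)
      have hE : Eexp < Real.log (1/2) := by
        rw [← Real.exp_lt_exp, this]; exact h12
      rw [one_div, Real.log_inv] at hE
      rw [hEb] at hE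
      linarith
    have h5 : (5:ℝ) ^ n = Real.exp ((n:ℝ) * Real.log 5) := by
      rw [Real.exp_nat_mul, Real.exp_log (by norm_num : (0:ℝ) < 5)]
    have h2 : (2:ℝ) ^ n = Real.exp ((n:ℝ) * Real.log 2) := by
      rw [Real.exp_nat_mul, Real.exp_log (by norm_num : (0:ℝ) < 2)]
    have h2' : (2:ℝ) = Real.exp (Real.log 2) := (Real.exp_log two_pos).symm
    calc (5:ℝ) ^ n * (2 ^ n * Real.exp (-(ε ^ 2 * n ^ 2) / A ^ 2))
        = Real.exp ((n:ℝ) * Real.log 5 + ((n:ℝ) * Real.log 2 + -(8 * b))) := by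
          rw [h5, h2, ← Real.exp_add, ← Real.exp_add]
          congr 1
          rw [← hb8]
          ring
      _ ≤ Real.exp (Real.log 2 + Eexp) := by
          rw [Real.exp_le_exp, hEb]
          have hn1 : (1:ℝ) ≤ n := by exact_mod_cast hn
          have hnl : (n:ℝ) * Real.log 2 ≤ (n:ℝ) * Real.log 5 :=
            mul_le_mul_of_nonneg_left hlog25.le (by linarith)
          nlinarith [mul_le_mul_of_nonneg_left hlog2.le (by linarith : (0:ℝ) ≤ (n:ℝ) - 1)]
      _ = 2 * Real.exp Eexp := by rw [Real.exp_add, ← h2']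
  have hbad2 : μ bad ≤ ENNReal.ofReal (2 * Real.exp Eexp) :=
    hbad.trans (ENNReal.ofReal_le_ofReal harith)
  have hgood : {ω | ‖∑ i, P i ω‖ < 2 * ε * n} = badᶜ := by
    ext ω; simp [hbaddef, not_le]
  rw [hgood, prob_compl_eq_one_sub hbadmeas]
  calc ENNReal.ofReal (1 - 2 * Real.exp Eexp)
      = ENNReal.ofReal 1 - ENNReal.ofReal (2 * Real.exp Eexp) :=
        ENNReal.ofReal_sub 1 (by positivity)
    _ = 1 - ENNReal.ofReal (2 * Real.exp Eexp) := by rw [ENNReal.ofReal_one]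
    _ ≤ 1 - μ bad := tsub_le_tsub_left hbad2 1
end
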